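/- For any graphs G and H with maximum degrees Δ(G) and Δ(H), we have χ_G(H) ≤ ⌈(Δ(H)+1)/Δ(G)⌉. -/

import Mathlib

open SimpleGraph

/-- `H` contains a copy of `G`: an injective map preserving adjacency. -/
def ContainsCopy {α β : Type*} (G : SimpleGraph α) (H : SimpleGraph β) : Prop :=
  ∃ f : α ↪ β, ∀ a b, G.Adj a b → H.Adj (f a) (f b)

/-- `H` is `G`-free. -/
def GFree {α β : Type*} (G : SimpleGraph α) (H : SimpleGraph β) : Prop :=
  ¬ ContainsCopy G H

/-- The `G`-free chromatic number of `H`. -/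
noncomputable def gChrom {α β : Type*} (G : SimpleGraph α) (H : SimpleGraph β) : ℕ :=
  sInf {k | ∃ c : β → Fin k, ∀ i, GFree G (H.induce {v | c v = i})}

/-- `H` is `G`-free `k`-critical. -/
def GFreeCritical {α β : Type*} (G : SimpleGraph α) (H : SimpleGraph β) (k : ℕ) : Prop :=
  gChrom G H = k ∧ ∀ F : H.Subgraph, F ≠ ⊤ → gChrom G F.coe ≤ k - 1

section Aux

open Finset

variable {β : Type*} [Fintype β] [DecidableEq β] (H : SimpleGraph β) [DecidableRel H.Adj] {k : ℕ}

/-- number of neighbors of `v` colored `j` -/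
private def Ncol (c : β → Fin k) (v : β) (j : Fin k) : ℕ :=
  ((H.neighborFinset v).filter (fun w => c w = j)).card

/-- number of monochromatic adjacent ordered pairs -/
private def Tcount (c : β → Fin k) : ℕ :=
  (Finset.univ.filter (fun p : β × β => H.Adj p.1 p.2 ∧ c p.1 = c p.2)).card

private lemma tcount_split (c : β → Fin k) (v : β) :
    Tcount H c =
      (Finset.univ.filter (fun p : β × β =>
        (H.Adj p.1 p.2 ∧ c p.1 = c p.2) ∧ p.1 ≠ v ∧ p.2 ≠ v)).card
      + 2 * Ncol H c v (c v) := by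
  have hsplit := Finset.card_filter_add_card_filter_not
    (s := Finset.univ.filter (fun p : β × β => H.Adj p.1 p.2 ∧ c p.1 = c p.2))
    (p := fun p : β × β => p.1 ≠ v ∧ p.2 ≠ v)
  rw [Finset.filter_filter] at hsplit
  rw [Tcount, ← hsplit]
  congr 1
  -- the pairs touching v
  have hset : (Finset.univ.filter (fun p : β × β => H.Adj p.1 p.2 ∧ c p.1 = c p.2)).filter
      (fun p => ¬(p.1 ≠ v ∧ p.2 ≠ v)) =
      (((H.neighborFinset v).filter (fun w => c w = c v)).image (fun w => (v, w))) ∪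
      (((H.neighborFinset v).filter (fun w => c w = c v)).image (fun w => (w, v))) := by
    ext ⟨x, y⟩
    simp only [Finset.mem_filter, Finset.mem_univ, true_and, Finset.mem_union,
      Finset.mem_image, mem_neighborFinset, not_and_or, not_not, Prod.mk.injEq]
    constructor
    · rintro ⟨⟨hadj, hc⟩, rfl | rfl⟩
      · exact Or.inl ⟨y, ⟨hadj, hc.symm⟩, rfl, rfl⟩
      · exact Or.inr ⟨x, ⟨H.adj_symm hadj, hc⟩, rfl, rfl⟩
    · rintro (⟨w, ⟨hadj, hc⟩, rfl, rfl⟩ | ⟨w, ⟨hadj, hc⟩, rfl, rfl⟩)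
      · exact ⟨⟨hadj, hc.symm⟩, Or.inl rfl⟩
      · exact ⟨⟨H.adj_symm hadj, hc⟩, Or.inr rfl⟩
  have hinj1 : Function.Injective (fun w : β => ((v, w) : β × β)) := by
    intro a b h; exact (Prod.mk.injEq _ _ _ _ ▸ h).2
  have hinj2 : Function.Injective (fun w : β => ((w, v) : β × β)) := by
    intro a b h; exact (Prod.mk.injEq _ _ _ _ ▸ h).1
  have hdisj : Disjoint
      (((H.neighborFinset v).filter (fun w => c w = c v)).image (fun w => ((v, w) : β × β)))
      (((H.neighborFinset v).filter (fun w => c w = c v)).image (fun w => (w, v))) := by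
    rw [Finset.disjoint_left]
    rintro p hp hq
    obtain ⟨w, hw, rfl⟩ := Finset.mem_image.mp hp
    obtain ⟨u, hu, h⟩ := Finset.mem_image.mp hq
    rw [Prod.ext_iff] at h
    obtain ⟨h1, h2⟩ := h
    have h1' : u = v := h1
    have h2' : v = w := h2
    subst h1'; subst h2'
    exact H.irrefl ((mem_neighborFinset _ _ _).mp (Finset.mem_filter.mp hu).1)
  rw [hset, Finset.card_union_of_disjoint hdisj, Finset.card_image_of_injective _ hinj1,
    Finset.card_image_of_injective _ hinj2, Ncol, two_mul]

private lemma ncol_update (c : β → Fin k) (v : β) (j j' : Fin k) :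
    Ncol H (Function.update c v j) v j' = Ncol H c v j' := by
  unfold Ncol
  congr 1
  apply Finset.filter_congr
  intro w hw
  have : w ≠ v := by
    rintro rfl
    exact H.irrefl (mem_neighborFinset _ _ _ |>.mp hw)
  simp [Function.update_of_ne this]

private lemma tcount_update (c : β → Fin k) (v : β) (j : Fin k) :
    Tcount H (Function.update c v j) =
      (Finset.univ.filter (fun p : β × β =>
        (H.Adj p.1 p.2 ∧ c p.1 = c p.2) ∧ p.1 ≠ v ∧ p.2 ≠ v)).card
      + 2 * Ncol H c v j := by
  rw [tcount_split H _ v, ncol_update, Function.update_self]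
  congr 1
  congr 1
  apply Finset.filter_congr
  intro p _
  constructor
  · rintro ⟨⟨hadj, hc⟩, h1, h2⟩
    rw [Function.update_of_ne h1, Function.update_of_ne h2] at hc
    exact ⟨⟨hadj, hc⟩, h1, h2⟩
  · rintro ⟨⟨hadj, hc⟩, h1, h2⟩
    rw [← Function.update_of_ne h1 j c, ← Function.update_of_ne h2 j c] at hc
    exact ⟨⟨hadj, hc⟩, h1, h2⟩

/-- Key lemma: a minimizer has few same-colored neighbors at each vertex. -/
private lemma key {d : ℕ} (hd : 1 ≤ d) (hk : H.maxDegree + 1 ≤ k * d)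
    (c : β → Fin k) (hmin : ∀ c' : β → Fin k, Tcount H c ≤ Tcount H c') (v : β) :
    Ncol H c v (c v) < d := by
  by_contra h
  push_neg at h
  have hall : ∀ j : Fin k, d ≤ Ncol H c v j := by
    intro j
    have h1 := hmin (Function.update c v j)
    rw [tcount_update, tcount_split H c v] at h1
    omega
  have hdeg : H.degree v = ∑ j : Fin k, Ncol H c v j := by
    rw [degree]
    exact Finset.card_eq_sum_card_fiberwise (fun w _ => Finset.mem_univ (c w))
  have : k * d ≤ H.degree v := by
    rw [hdeg]
    calc k * d = ∑ _j : Fin k, d := by simp [Finset.sum_const, mul_comm]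
    _ ≤ _ := Finset.sum_le_sum (fun j _ => hall j)
  have := H.degree_le_maxDegree v
  omega

end Aux

theorem stmt2 {α β : Type*} [Fintype α] [Fintype β]
    (G : SimpleGraph α) (H : SimpleGraph β) [DecidableRel G.Adj] [DecidableRel H.Adj]
    (hG : 1 ≤ G.maxDegree) :
    gChrom G H ≤ ⌈((H.maxDegree + 1 : ℚ) / (G.maxDegree : ℚ))⌉₊ := by
  classical
  set d := G.maxDegree with hd
  set k := ⌈((H.maxDegree + 1 : ℚ) / (d : ℚ))⌉₊ with hkdef
  -- α is nonempty
  have hαne : Nonempty α := by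
    by_contra hne
    rw [not_nonempty_iff] at hne
    have : G.maxDegree = 0 := by
      rw [maxDegree]
      simp [Finset.univ_eq_empty]
    omega
  -- k * d ≥ maxDegree H + 1
  have hk : H.maxDegree + 1 ≤ k * d := by
    have h1 : ((H.maxDegree + 1 : ℚ) / (d : ℚ)) ≤ (k : ℚ) := Nat.le_ceil _
    have hd0 : (0 : ℚ) < (d : ℚ) := by exact_mod_cast hd ▸ hG
    rw [div_le_iff₀ hd0] at h1
    exact_mod_cast h1
  suffices h : k ∈ {k | ∃ c : β → Fin k, ∀ i, GFree G (H.induce {v | c v = i})} from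
    Nat.sInf_le h
  -- if β is empty any coloring works
  by_cases hβ : Nonempty β
  swap
  · rw [not_nonempty_iff] at hβ
    refine ⟨fun v => hβ.elim v, fun i => ?_⟩
    rintro ⟨f, hf⟩
    exact hβ.elim (f (Classical.arbitrary α)).val
  -- k positive
  have hkpos : 0 < k := by
    rcases Nat.eq_zero_or_pos k with h0 | h; swap; · exact h
    rw [h0] at hk; omega
  haveI : Nonempty (Fin k) := ⟨⟨0, hkpos⟩⟩
  -- minimize Tcount
  obtain ⟨c, -, hmin⟩ := Finset.exists_min_image Finset.univ (fun c : β → Fin k => Tcount H c)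
    ⟨Classical.arbitrary _, Finset.mem_univ _⟩
  refine ⟨c, fun i => ?_⟩
  rintro ⟨f, hf⟩
  -- pick a vertex of maximal degree in G
  obtain ⟨a, ha⟩ := G.exists_maximal_degree_vertex
  set v := (f a).val with hv
  have hcv : c v = i := (f a).property
  -- the neighbors of a embed into same-colored neighbors of v
  have hle : d ≤ Ncol H c v (c v) := by
    rw [hcv]
    rw [hd, ha, ← card_neighborFinset_eq_degree]
    apply Finset.card_le_card_of_injOn (fun b => (f b).val)
    · intro b hb
      rw [Finset.mem_coe, SimpleGraph.mem_neighborFinset] at hb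
      have hadj := hf a b hb
      rw [Finset.mem_coe, Finset.mem_filter, SimpleGraph.mem_neighborFinset]
      exact ⟨hadj, (f b).property⟩
    · intro x _ y _ hxy
      exact f.injective (Subtype.ext hxy)
  have := key H hG hk c (fun c' => hmin c' (Finset.mem_univ c')) v
  omega
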